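/- Let R be a commutative arithmetical ring (the ideal lattice is distributive). Then for any ideals A, B, C of R: A(B ∩ C) = AB ∩ AC, provided R is additionally a multiplication ring (for ideals X ⊆ Y there is Z with X = YZ). -/
import Mathlib

open IsLocalization in
lemma loc_map_inf {R S : Type*} [CommRing R] [CommRing S] [Algebra R S] (M : Submonoid R)
    [IsLocalization M S] (I J : Ideal R) :
    Ideal.map (algebraMap R S) (I ⊓ J) =
      Ideal.map (algebraMap R S) I ⊓ Ideal.map (algebraMap R S) J := by
  apply le_antisymm
  · exact le_inf (Ideal.map_mono inf_le_left) (Ideal.map_mono inf_le_right)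
  · intro z hz
    rw [Submodule.mem_inf] at hz
    obtain ⟨hzI, hzJ⟩ := hz
    rw [IsLocalization.mem_map_algebraMap_iff M S] at hzI hzJ ⊢
    obtain ⟨⟨⟨a, ha⟩, s⟩, hs⟩ := hzI
    obtain ⟨⟨⟨b, hb⟩, t⟩, ht⟩ := hzJ
    have key : algebraMap R S (a * (t : R)) = algebraMap R S (b * (s : R)) := by
      simp only [map_mul]
      rw [← hs, ← ht]; ring
    obtain ⟨u, hu⟩ := (IsLocalization.eq_iff_exists M S).mp key
    have hc : (u : R) * (a * (t : R)) ∈ I ⊓ J := by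
      constructor
      · exact Ideal.mul_mem_left _ _ (Ideal.mul_mem_right _ _ ha)
      · rw [hu]; exact Ideal.mul_mem_left _ _ (Ideal.mul_mem_right _ _ hb)
    refine ⟨⟨⟨(u : R) * (a * (t : R)), hc⟩, u * s * t⟩, ?_⟩
    simp only [Submonoid.coe_mul, map_mul]
    rw [← hs]; ring

lemma jensen_lemma {R : Type*} [CommRing R]
    (hdist : ∀ A B C : Ideal R, A ⊓ (B ⊔ C) = (A ⊓ B) ⊔ (A ⊓ C))
    (a b : R) : ∃ t : R, t * a ∈ Ideal.span {b} ∧ (1 - t) * b ∈ Ideal.span {a} := by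
  have hb : b ∈ Ideal.span {b} ⊓ (Ideal.span {a} ⊔ Ideal.span {a + b}) := by
    refine ⟨Ideal.mem_span_singleton_self b, ?_⟩
    have h2 : (a + b) - a ∈ Ideal.span {a} ⊔ Ideal.span {a + b} :=
      Submodule.sub_mem _ (Ideal.mem_sup_right (Ideal.mem_span_singleton_self _))
        (Ideal.mem_sup_left (Ideal.mem_span_singleton_self _))
    simpa using h2
  rw [hdist] at hb
  obtain ⟨x, hx, y, hy, hxy⟩ := Submodule.mem_sup.mp hb
  obtain ⟨t, ht⟩ := Ideal.mem_span_singleton'.mp hy.2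
  refine ⟨t, ?_, ?_⟩
  · have : t * a = y - t * b := by rw [← ht]; ring
    rw [this]
    exact Submodule.sub_mem _ hy.1 (Ideal.mul_mem_left _ _ (Ideal.mem_span_singleton_self _))
  · have : (1 - t) * b = x + t * a := by
      have hx' : x = b - y := by rw [← hxy]; ring
      rw [hx', ← ht]; ring
    rw [this]
    exact Submodule.add_mem _ hx.2 (Ideal.mul_mem_left _ _ (Ideal.mem_span_singleton_self _))

lemma chain_of_local {R : Type*} [CommRing R] [IsLocalRing R]
    (hdist : ∀ A B C : Ideal R, A ⊓ (B ⊔ C) = (A ⊓ B) ⊔ (A ⊓ C))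
    (I J : Ideal R) : I ≤ J ∨ J ≤ I := by
  by_contra h
  push_neg at h
  obtain ⟨a, haI, haJ⟩ := SetLike.not_le_iff_exists.mp h.1
  obtain ⟨b, hbJ, hbI⟩ := SetLike.not_le_iff_exists.mp h.2
  obtain ⟨t, h1, h2⟩ := jensen_lemma hdist a b
  rcases IsLocalRing.isUnit_or_isUnit_one_sub_self t with hu | hu
  · have ha : a ∈ Ideal.span {b} := by
      rwa [Ideal.unit_mul_mem_iff_mem _ hu] at h1
    exact haJ ((Ideal.span_singleton_le_iff_mem J).mpr hbJ ha)
  · have hb : b ∈ Ideal.span {a} := by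
      rwa [Ideal.unit_mul_mem_iff_mem _ hu] at h2
    exact hbI ((Ideal.span_singleton_le_iff_mem I).mpr haI hb)

lemma dist_of_map {R S : Type*} [CommRing R] [CommRing S] [Algebra R S] (M : Submonoid R)
    [IsLocalization M S]
    (hdist : ∀ A B C : Ideal R, A ⊓ (B ⊔ C) = (A ⊓ B) ⊔ (A ⊓ C)) :
    ∀ A' B' C' : Ideal S, A' ⊓ (B' ⊔ C') = (A' ⊓ B') ⊔ (A' ⊓ C') := by
  intro A' B' C'
  rw [← IsLocalization.map_comap M S A', ← IsLocalization.map_comap M S B',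
    ← IsLocalization.map_comap M S C', ← Ideal.map_sup, ← loc_map_inf M, ← loc_map_inf M,
    ← loc_map_inf M, ← Ideal.map_sup, hdist]

lemma mul_inf_of_chain {R : Type*} [CommRing R] (h : ∀ I J : Ideal R, I ≤ J ∨ J ≤ I)
    (A B C : Ideal R) : A * (B ⊓ C) = (A * B) ⊓ (A * C) := by
  rcases h B C with hbc | hcb
  · rw [inf_eq_left.mpr hbc, inf_eq_left.mpr (Ideal.mul_mono_right hbc)]
  · rw [inf_eq_right.mpr hcb, inf_eq_right.mpr (Ideal.mul_mono_right hcb)]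

theorem mul_inf_eq_inf_mul_of_arithmetical {R : Type*} [CommRing R]
    (hdist : ∀ A B C : Ideal R, A ⊓ (B ⊔ C) = (A ⊓ B) ⊔ (A ⊓ C))
    (hmul : ∀ X Y : Ideal R, X ≤ Y → ∃ Z : Ideal R, X = Y * Z)
    (A B C : Ideal R) :
    A * (B ⊓ C) = (A * B) ⊓ (A * C) := by
  apply Ideal.eq_of_localization_maximal
  intro P hP
  rw [Ideal.map_mul, loc_map_inf P.primeCompl, loc_map_inf P.primeCompl, Ideal.map_mul,
    Ideal.map_mul]
  exact mul_inf_of_chain (chain_of_local (dist_of_map P.primeCompl hdist)) _ _ _
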